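/- ReMBo reduction: Let X̄ ∈ ℝ^{N×L} be a matrix with at most K nonzero rows and spark(Φ) > 2K, and let a ∈ ℝ^L be any vector. Then x̄ = X̄a is K-sparse and is the unique K-sparse solution of y = Φx where y = (ΦX̄)a. -/

import Mathlib

open Matrix Finset

/-- The spark of a matrix: the smallest number of columns that are linearly
dependent (`⊤` if the columns are linearly independent). -/
noncomputable def spark {M N : ℕ} (Φ : Matrix (Fin M) (Fin N) ℝ) : ℕ∞ :=
  sInf {k : ℕ∞ | ∃ s : Finset (Fin N), (s.card : ℕ∞) = k ∧
    ¬ LinearIndependent ℝ (fun i : s => Φ.transpose i.1)}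

/-- A vector is `K`-sparse if it has at most `K` nonzero entries. -/
def KSparse {N : ℕ} (K : ℕ) (x : Fin N → ℝ) : Prop :=
  (Finset.univ.filter fun i => x i ≠ 0).card ≤ K

open Classical in
/-- The row support of a matrix: the set of indices of its not-identically-zero
rows. -/
noncomputable def rowSupport {N L : ℕ} (X : Matrix (Fin N) (Fin L) ℝ) : Finset (Fin N) :=
  Finset.univ.filter fun i => ∃ j, X i j ≠ 0

/-- ReMBo reduction: if `X̄` has at most `K` nonzero rows and `spark Φ > 2K`,
then for any vector `a`, `x̄ = X̄ a` is `K`-sparse and is the unique `K`-sparse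
solution of `y = Φ x` with `y = (Φ X̄) a`. -/
theorem rembo_reduction {M N L K : ℕ} (Φ : Matrix (Fin M) (Fin N) ℝ)
    (Xb : Matrix (Fin N) (Fin L) ℝ) (hK : (rowSupport Xb).card ≤ K)
    (hspark : (2 * K : ℕ∞) < spark Φ) (a : Fin L → ℝ) :
    KSparse K (Xb.mulVec a) ∧
    ∀ x : Fin N → ℝ, KSparse K x →
      Φ.mulVec x = (Φ * Xb).mulVec a → x = Xb.mulVec a := by
  have hsub : (Finset.univ.filter fun i => Xb.mulVec a i ≠ 0) ⊆ rowSupport Xb := by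
    intro i hi
    simp only [mem_filter, mem_univ, true_and] at hi
    simp only [rowSupport, mem_filter, mem_univ, true_and]
    by_contra h
    push_neg at h
    exact hi (by simp [mulVec, dotProduct, h])
  have hsp : KSparse K (Xb.mulVec a) := le_trans (Finset.card_le_card hsub) hK
  refine ⟨hsp, ?_⟩
  intro x hx hΦ
  by_contra hne
  set d : Fin N → ℝ := x - Xb.mulVec a with hd
  have hdne : d ≠ 0 := sub_ne_zero.mpr hne
  have hΦd : Φ.mulVec d = 0 := by
    rw [hd, Matrix.mulVec_sub, hΦ, Matrix.mulVec_mulVec, sub_self]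
  set s : Finset (Fin N) := Finset.univ.filter fun i => d i ≠ 0 with hs
  have hcard : s.card ≤ 2 * K := by
    have : s ⊆ (Finset.univ.filter fun i => x i ≠ 0) ∪
        (Finset.univ.filter fun i => Xb.mulVec a i ≠ 0) := by
      intro i hi
      simp only [hs, mem_filter, mem_univ, true_and, hd, Pi.sub_apply] at hi
      simp only [mem_union, mem_filter, mem_univ, true_and]
      by_contra h
      push_neg at h
      exact hi (by rw [h.1, h.2, sub_zero])
    calc s.card ≤ _ := Finset.card_le_card this
      _ ≤ _ := Finset.card_union_le _ _
      _ ≤ K + K := add_le_add hx hsp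
      _ = 2 * K := (two_mul K).symm
  have hdep : ¬ LinearIndependent ℝ (fun i : s => Φ.transpose i.1) := by
    rw [Fintype.linearIndependent_iff]
    push_neg
    refine ⟨fun i => d i.1, ?_, ?_⟩
    · funext m
      have : ∑ i : s, d i.1 * Φ m i.1 = ∑ i ∈ s, d i * Φ m i :=
        Finset.sum_attach s fun i => d i * Φ m i
      have h2 : ∑ i ∈ s, d i * Φ m i = ∑ i, d i * Φ m i := by
        apply Finset.sum_subset (Finset.subset_univ s)
        intro i _ hi
        simp only [hs, mem_filter, mem_univ, true_and, not_not] at hi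
        rw [hi, zero_mul]
      have h3 : ∑ i, Φ m i * d i = 0 := congrFun hΦd m
      simp only [Finset.sum_apply, Pi.smul_apply, Matrix.transpose_apply, smul_eq_mul]
      rw [this, h2]
      simpa [mul_comm] using h3
    · obtain ⟨i, hi⟩ := Function.ne_iff.mp hdne
      have hi' : d i ≠ 0 := by simpa using hi
      exact ⟨⟨i, by simp [hs, hi']⟩, hi'⟩
  have hle : spark Φ ≤ (s.card : ℕ∞) := csInf_le (OrderBot.bddBelow _) ⟨s, rfl, hdep⟩
  have : spark Φ ≤ (2 * K : ℕ∞) := hle.trans (by exact_mod_cast Nat.cast_le.mpr hcard)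
  exact absurd hspark (not_lt.mpr this)
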